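/- Let A(t) := (β/(16γ)) ∑_{m=1}^∞ (γ^m/m²) t^m be a formal power series with real positive coefficients β, γ > 0. Then A(t)² ≪ (β/γ) A(t), i.e., each coefficient of A(t)² is at most the corresponding coefficient of (β/γ)A(t). -/

import Mathlib

lemma sum_inv_sq_le (n : ℕ) :
    ∑ i ∈ Finset.Icc 1 n, ((i : ℝ) ^ 2)⁻¹ ≤ 2 - (n : ℝ)⁻¹ := by
  induction n with
  | zero => simp
  | succ n ih =>
      rcases Nat.eq_zero_or_pos n with h | h
      · subst h; norm_num
      rw [Finset.sum_Icc_succ_top (by omega)]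
      have h0 : (0:ℝ) < n := by exact_mod_cast h
      have h1 : (0:ℝ) < (n:ℝ) + 1 := by positivity
      have key : (((n+1 : ℕ) : ℝ) ^ 2)⁻¹ ≤ (n:ℝ)⁻¹ - ((n:ℝ)+1)⁻¹ := by
        push_cast
        rw [inv_eq_one_div, inv_eq_one_div, inv_eq_one_div,
          div_sub_div _ _ h0.ne' h1.ne', div_le_div_iff₀ (by positivity) (by positivity)]
        nlinarith
      push_cast at *
      linarith

lemma refl_sum (m : ℕ) :
    ∑ i ∈ Finset.Ico 1 m, ((((m - i : ℕ)) : ℝ) ^ 2)⁻¹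
      = ∑ i ∈ Finset.Ico 1 m, ((i : ℝ) ^ 2)⁻¹ := by
  refine Finset.sum_nbij' (fun i => m - i) (fun i => m - i) ?_ ?_ ?_ ?_ ?_ <;>
    simp only [Finset.mem_Ico] <;> intro a ha
  · omega
  · omega
  · omega
  · omega
  · norm_num

lemma key_sum (m : ℕ) (hm : 1 ≤ m) :
    ∑ i ∈ Finset.Ico 1 m, ((i : ℝ) ^ 2 * (((m - i : ℕ)) : ℝ) ^ 2)⁻¹
      ≤ 16 / (m : ℝ) ^ 2 := by
  have hm0 : (0:ℝ) < m := by exact_mod_cast hm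
  have step : ∀ i ∈ Finset.Ico 1 m,
      ((i : ℝ) ^ 2 * (((m - i : ℕ)) : ℝ) ^ 2)⁻¹
        ≤ 2 / (m:ℝ)^2 * (((i : ℝ) ^ 2)⁻¹ + ((((m - i : ℕ)) : ℝ) ^ 2)⁻¹) := by
    intro i hi
    simp only [Finset.mem_Ico] at hi
    have hi1 : (0:ℝ) < i := by exact_mod_cast hi.1
    have hj1 : (0:ℝ) < ((m - i : ℕ) : ℝ) := by
      have : 1 ≤ m - i := by omega
      exact_mod_cast this
    have hij : ((m - i : ℕ) : ℝ) = (m : ℝ) - i := by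
      have : (m - i : ℕ) = m - i := rfl
      push_cast [Nat.cast_sub (le_of_lt hi.2)]
      ring
    set j : ℝ := ((m - i : ℕ) : ℝ)
    have hm2 : (m:ℝ)^2 ≤ 2 * ((i:ℝ)^2 + j^2) := by
      have : (m:ℝ) = i + j := by rw [hij]; ring
      nlinarith [sq_nonneg ((i:ℝ) - j)]
    rw [inv_eq_one_div, div_le_iff₀ (by positivity)]
    have expand : 2 / (m:ℝ)^2 * (((i:ℝ) ^ 2)⁻¹ + (j ^ 2)⁻¹) * ((i:ℝ)^2 * j^2)
        = 2 * ((i:ℝ)^2 + j^2) / (m:ℝ)^2 := by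
      field_simp
      ring
    rw [expand, le_div_iff₀ (by positivity)]
    nlinarith [hm2]
  calc ∑ i ∈ Finset.Ico 1 m, ((i : ℝ) ^ 2 * (((m - i : ℕ)) : ℝ) ^ 2)⁻¹
      ≤ ∑ i ∈ Finset.Ico 1 m,
          2 / (m:ℝ)^2 * (((i : ℝ) ^ 2)⁻¹ + ((((m - i : ℕ)) : ℝ) ^ 2)⁻¹) :=
        Finset.sum_le_sum step
    _ = 2 / (m:ℝ)^2 * (∑ i ∈ Finset.Ico 1 m, ((i : ℝ) ^ 2)⁻¹
          + ∑ i ∈ Finset.Ico 1 m, ((((m - i : ℕ)) : ℝ) ^ 2)⁻¹) := by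
        rw [← Finset.mul_sum, Finset.sum_add_distrib]
    _ = 2 / (m:ℝ)^2 * (2 * ∑ i ∈ Finset.Ico 1 m, ((i : ℝ) ^ 2)⁻¹) := by
        rw [refl_sum]; ring
    _ ≤ 2 / (m:ℝ)^2 * (2 * 2) := by
        have : ∑ i ∈ Finset.Ico 1 m, ((i : ℝ) ^ 2)⁻¹ ≤ 2 := by
          have : Finset.Ico 1 m = Finset.Icc 1 (m-1) := by
            ext x; simp [Finset.mem_Ico, Finset.mem_Icc]; omega
          rw [this]
          have := sum_inv_sq_le (m-1)
          have h2 : (0:ℝ) ≤ ((m-1:ℕ):ℝ)⁻¹ := by positivity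
          linarith
        gcongr
    _ ≤ 16 / (m:ℝ)^2 := by rw [div_mul_eq_mul_div]; gcongr; norm_num

theorem stmt14 (β γ : ℝ) (hβ : 0 < β) (hγ : 0 < γ) (m : ℕ) :
    ∑ i ∈ Finset.range (m + 1),
        (if i = 0 then 0 else β / (16 * γ) * γ ^ i / (i : ℝ) ^ 2) *
        (if m - i = 0 then 0 else β / (16 * γ) * γ ^ (m - i) / ((m - i : ℕ) : ℝ) ^ 2) ≤
      (β / γ) * (if m = 0 then 0 else β / (16 * γ) * γ ^ m / (m : ℝ) ^ 2) := by
  rcases Nat.eq_zero_or_pos m with hm | hm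
  · subst hm; simp
  set c : ℝ := β / (16 * γ) with hc
  have hcpos : 0 < c := by positivity
  rw [if_neg (by omega)]
  have hsplit : Finset.range (m+1) = insert 0 (insert m (Finset.Ico 1 m)) := by
    ext x; simp [Finset.mem_Ico]; omega
  rw [hsplit, Finset.sum_insert (by simp [Finset.mem_Ico]; omega),
    Finset.sum_insert (by simp [Finset.mem_Ico])]
  have heq : ∀ i ∈ Finset.Ico 1 m,
      (if i = 0 then 0 else c * γ ^ i / (i : ℝ) ^ 2) *
        (if m - i = 0 then 0 else c * γ ^ (m - i) / ((m - i : ℕ) : ℝ) ^ 2)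
      = c^2 * γ ^ m * ((i : ℝ) ^ 2 * (((m - i : ℕ)) : ℝ) ^ 2)⁻¹ := by
    intro i hi
    simp only [Finset.mem_Ico] at hi
    rw [if_neg (by omega), if_neg (by omega)]
    have : γ ^ i * γ ^ (m - i) = γ ^ m := by
      rw [← pow_add]; congr 1; omega
    rw [div_mul_div_comm, div_eq_mul_inv, sq c, ← this]
    ring
  rw [Finset.sum_congr rfl heq, ← Finset.mul_sum]
  simp only [Nat.sub_self, reduceIte, zero_mul, mul_zero, zero_add]
  have := key_sum m hm
  have hmain : c^2 * γ ^ m * (∑ i ∈ Finset.Ico 1 m, ((i : ℝ) ^ 2 * (((m - i : ℕ)) : ℝ) ^ 2)⁻¹)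
      ≤ c^2 * γ ^ m * (16 / (m:ℝ)^2) := by
    gcongr
  refine hmain.trans ?_
  have hm0 : (0:ℝ) < m := by exact_mod_cast hm
  have : (β/γ) * (c * γ^m / (m:ℝ)^2) = c^2 * γ^m * (16 / (m:ℝ)^2) := by
    rw [hc]; field_simp
  rw [this]
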